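/- Let p be an odd prime and let G be a finite group that is p-stable. Then every subgroup H of G is p-stable. -/

import Mathlib

/-- `O_p(G)`: the largest normal `p`-subgroup of `G`. -/
def pCore (p : ℕ) (G : Type*) [Group G] : Subgroup G :=
  sSup {N : Subgroup G | N.Normal ∧ IsPGroup p N}

lemma pCore_spec (p : ℕ) (K : Type*) [Group K] [Finite K] :
    (pCore p K).Normal ∧ IsPGroup p (pCore p K) := by
  set S : Set (Subgroup K) := {N : Subgroup K | N.Normal ∧ IsPGroup p N} with hS
  obtain ⟨M, hM, hmax⟩ := Set.Finite.exists_maximalFor id S (Set.toFinite _)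
    ⟨⊥, inferInstance, IsPGroup.of_bot⟩
  have hge : ∀ N ∈ S, N ≤ M := by
    intro N hN
    haveI := hN.1; haveI := hM.1
    have hmem : N ⊔ M ∈ S := ⟨inferInstance, hN.2.to_sup_of_normal_right hM.2⟩
    have h2 : M = N ⊔ M := le_antisymm le_sup_right (hmax hmem le_sup_right)
    exact le_sup_left.trans h2.ge
  have : pCore p K = M := le_antisymm (sSup_le hge) (le_sSup hM)
  rw [this]; exact hM

instance relCent_normal {G : Type*} [Group G] (Q : Subgroup G) :
    ((Subgroup.centralizer (Q : Set G)).subgroupOf (Subgroup.normalizer (Q : Set G))).Normal := by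
  rw [← Subgroup.normalizerMonoidHom_ker]
  exact MonoidHom.normal_ker _

open scoped commutatorElement

/-- A group `G` is `p`-stable if for every `p`-subgroup `Q` and every `x ∈ N_G(Q)` with
`[[a,x],x] = 1` for all `a ∈ Q`, the image of `x` in `N_G(Q)/C_G(Q)` lies in
`O_p(N_G(Q)/C_G(Q))`. -/
def IsPStable (p : ℕ) (G : Type*) [Group G] : Prop :=
  ∀ Q : Subgroup G, IsPGroup p Q →
    ∀ x : (Subgroup.normalizer (Q : Set G)), (∀ a ∈ Q, ⁅⁅a, (x : G)⁆, (x : G)⁆ = 1) →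
      (QuotientGroup.mk x :
          (Subgroup.normalizer (Q : Set G)) ⧸ (Subgroup.centralizer (Q : Set G)).subgroupOf (Subgroup.normalizer (Q : Set G))) ∈
        pCore p ((Subgroup.normalizer (Q : Set G)) ⧸ (Subgroup.centralizer (Q : Set G)).subgroupOf (Subgroup.normalizer (Q : Set G)))

/-- Every subgroup of a `p`-stable finite group (`p` an odd prime) is `p`-stable. -/
theorem pStable_subgroup (p : ℕ) (hp : p.Prime) (hodd : Odd p)
    (G : Type*) [Group G] [Finite G] (hG : IsPStable p G) (H : Subgroup G) :
    IsPStable p H := by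
  intro Q hQ x hx
  set Q' : Subgroup G := Q.map H.subtype with hQ'def
  have hQ'p : IsPGroup p Q' := hQ.map _
  have hnorm : ∀ y : (Subgroup.normalizer (Q : Set H)), ((y : H) : G) ∈ (Subgroup.normalizer (Q' : Set G)) := by
    intro y
    rw [Subgroup.mem_normalizer_iff]
    intro n
    constructor
    · rintro ⟨a, ha, rfl⟩
      exact ⟨(y : H) * a * (y : H)⁻¹,
        (Subgroup.mem_normalizer_iff.mp y.2 a).mp ha, by simp⟩
    · rintro ⟨b, hb, hb2⟩
      have hbQ : (y : H)⁻¹ * b * (y : H) ∈ Q := by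
        refine (Subgroup.mem_normalizer_iff.mp y.2 _).mpr ?_
        simpa [mul_assoc] using hb
      refine ⟨(y : H)⁻¹ * b * (y : H), hbQ, ?_⟩
      simp only [map_mul, map_inv, hb2, Subgroup.coe_subtype]
      group
  let f : (Subgroup.normalizer (Q : Set H)) →* (Subgroup.normalizer (Q' : Set G)) :=
    MonoidHom.mk' (fun y => ⟨((y : H) : G), hnorm y⟩) (fun a b => rfl)
  set C' : Subgroup (Subgroup.normalizer (Q' : Set G)) :=
    (Subgroup.centralizer (Q' : Set G)).subgroupOf (Subgroup.normalizer (Q' : Set G)) with hC'def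
  let ψ : (Subgroup.normalizer (Q : Set H)) →* (Subgroup.normalizer (Q' : Set G)) ⧸ C' := (QuotientGroup.mk' C').comp f
  have hker : ∀ y : (Subgroup.normalizer (Q : Set H)), ψ y = 1 ↔ (y : H) ∈ Subgroup.centralizer (Q : Set H) := by
    intro y
    rw [MonoidHom.comp_apply, QuotientGroup.mk'_apply, QuotientGroup.eq_one_iff,
      Subgroup.mem_subgroupOf]
    constructor
    · intro hy
      rw [Subgroup.mem_centralizer_iff]
      intro h hh
      have h2 : (h : G) * ((y : H) : G) = ((y : H) : G) * (h : G) :=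
        Subgroup.mem_centralizer_iff.mp hy ((h : G)) ⟨h, hh, rfl⟩
      exact_mod_cast h2
    · intro hy
      rw [Subgroup.mem_centralizer_iff]
      rintro g ⟨a, ha, rfl⟩
      have := Subgroup.mem_centralizer_iff.mp hy a ha
      exact_mod_cast congrArg (H.subtype) this
  set N : Subgroup (Subgroup.normalizer (Q : Set H)) :=
    (Subgroup.centralizer (Q : Set H)).subgroupOf (Subgroup.normalizer (Q : Set H)) with hNdef
  let φ : ((Subgroup.normalizer (Q : Set H)) ⧸ N) →* (Subgroup.normalizer (Q' : Set G)) ⧸ C' :=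
    QuotientGroup.lift N ψ (fun y hy => (hker y).mpr hy)
  have hφmk : ∀ y : (Subgroup.normalizer (Q : Set H)), φ (QuotientGroup.mk y) = ψ y := fun y => rfl
  have hinj : Function.Injective φ := by
    rw [← MonoidHom.ker_eq_bot_iff, eq_bot_iff]
    intro z hz
    obtain ⟨y, rfl⟩ := QuotientGroup.mk_surjective z
    have h1 : ψ y = 1 := hz
    rw [Subgroup.mem_bot, QuotientGroup.eq_one_iff]
    exact Subgroup.mem_subgroupOf.mpr ((hker y).mp h1)
  -- apply hG to Q' and f x
  have hquad : ∀ a ∈ Q', ⁅⁅a, ((f x : (Subgroup.normalizer (Q' : Set G))) : G)⁆, ((f x : (Subgroup.normalizer (Q' : Set G))) : G)⁆ = 1 := by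
    rintro g ⟨a, ha, rfl⟩
    have := congrArg H.subtype (hx a ha)
    simp [map_commutatorElement] at this
    exact this
  have hbig := hG Q' hQ'p (f x) hquad
  haveI : Finite ((Subgroup.normalizer (Q' : Set G)) ⧸ C') := Quotient.finite _
  haveI : Finite ((Subgroup.normalizer (Q : Set H)) ⧸ N) := Quotient.finite _
  have hbN := (pCore_spec p ((Subgroup.normalizer (Q' : Set G)) ⧸ C')).1
  have hbP := (pCore_spec p ((Subgroup.normalizer (Q' : Set G)) ⧸ C')).2
  have hmemK : (QuotientGroup.mk x : (Subgroup.normalizer (Q : Set H)) ⧸ N) ∈ (pCore p ((Subgroup.normalizer (Q' : Set G)) ⧸ C')).comap φ := by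
    rw [Subgroup.mem_comap, hφmk]
    exact hbig
  have hKS : (pCore p ((Subgroup.normalizer (Q' : Set G)) ⧸ C')).comap φ ∈
      {K : Subgroup ((Subgroup.normalizer (Q : Set H)) ⧸ N) | K.Normal ∧ IsPGroup p K} :=
    ⟨hbN.comap φ, hbP.comap_of_injective φ hinj⟩
  exact le_sSup hKS hmemK
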